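/- Consider the planar time-varying system ẋ₁ = −x₁ − arctan(x₁)x₂ + cos(2πt), ẋ₂ = −x₂. Let x' be a trajectory of this system on [0, ∞) with x'₂(0) = 0, and let x be any trajectory of this system on [0, ∞). Then |x(t) − x'(t)|₂ ≤ e^{(π/4 − 1)t} |x(0) − x'(0)|₂ for every t ≥ 0, where |·|₂ is the Euclidean norm on ℝ². -/

import Mathlib

open Filter Topology Set Matrix

theorem stmt16
    (x x' : ℝ → Fin 2 → ℝ)
    (hx'c : ContinuousOn x' (Ici (0:ℝ)))
    (hx'd : ∀ t > (0:ℝ), HasDerivAt x'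
      ![-(x' t 0) - Real.arctan (x' t 0) * x' t 1 + Real.cos (2 * Real.pi * t), -(x' t 1)] t)
    (hx'2 : x' 0 1 = 0)
    (hxc : ContinuousOn x (Ici (0:ℝ)))
    (hxd : ∀ t > (0:ℝ), HasDerivAt x
      ![-(x t 0) - Real.arctan (x t 0) * x t 1 + Real.cos (2 * Real.pi * t), -(x t 1)] t) :
    ∀ t ≥ (0:ℝ),
      Real.sqrt ((x t 0 - x' t 0) ^ 2 + (x t 1 - x' t 1) ^ 2) ≤
        Real.exp ((Real.pi / 4 - 1) * t) *
          Real.sqrt ((x 0 0 - x' 0 0) ^ 2 + (x 0 1 - x' 0 1) ^ 2) := by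
  -- component continuity
  have hc0 : ContinuousOn (fun t => x t 0) (Ici (0:ℝ)) :=
    (continuous_apply (0 : Fin 2)).comp_continuousOn hxc
  have hc1 : ContinuousOn (fun t => x t 1) (Ici (0:ℝ)) :=
    (continuous_apply (1 : Fin 2)).comp_continuousOn hxc
  have hc0' : ContinuousOn (fun t => x' t 0) (Ici (0:ℝ)) :=
    (continuous_apply (0 : Fin 2)).comp_continuousOn hx'c
  have hc1' : ContinuousOn (fun t => x' t 1) (Ici (0:ℝ)) :=
    (continuous_apply (1 : Fin 2)).comp_continuousOn hx'c
  -- component derivatives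
  have hd0 : ∀ t > (0:ℝ), HasDerivAt (fun s => x s 0)
      (-(x t 0) - Real.arctan (x t 0) * x t 1 + Real.cos (2 * Real.pi * t)) t :=
    fun t ht => by simpa using (hasDerivAt_pi.1 (hxd t ht)) 0
  have hd1 : ∀ t > (0:ℝ), HasDerivAt (fun s => x s 1) (-(x t 1)) t :=
    fun t ht => by simpa using (hasDerivAt_pi.1 (hxd t ht)) 1
  have hd0' : ∀ t > (0:ℝ), HasDerivAt (fun s => x' s 0)
      (-(x' t 0) - Real.arctan (x' t 0) * x' t 1 + Real.cos (2 * Real.pi * t)) t :=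
    fun t ht => by simpa using (hasDerivAt_pi.1 (hx'd t ht)) 0
  have hd1' : ∀ t > (0:ℝ), HasDerivAt (fun s => x' s 1) (-(x' t 1)) t :=
    fun t ht => by simpa using (hasDerivAt_pi.1 (hx'd t ht)) 1
  -- Step 1: x' t 1 = 0 for all t ≥ 0
  have key2 : ∀ t ∈ Ici (0:ℝ), x' t 1 = 0 := by
    have hgd : ∀ t ∈ interior (Ici (0:ℝ)),
        HasDerivAt (fun s => (x' s 1 * Real.exp s) ^ 2) 0 t := by
      intro t ht
      rw [interior_Ici] at ht
      have h1 : HasDerivAt (fun s => x' s 1 * Real.exp s) 0 t := by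
        have := (hd1' t ht).fun_mul (Real.hasDerivAt_exp t)
        refine this.congr_deriv ?_
        ring
      have := h1.fun_pow 2
      refine this.congr_deriv ?_
      ring
    have hg : AntitoneOn (fun t => (x' t 1 * Real.exp t) ^ 2) (Ici 0) := by
      apply antitoneOn_of_deriv_nonpos (convex_Ici 0)
      · exact ((hc1'.mul Real.continuous_exp.continuousOn).pow 2)
      · intro t ht
        exact (hgd t ht).differentiableAt.differentiableWithinAt
      · intro t ht
        rw [(hgd t ht).deriv]
    intro t ht
    have h := hg self_mem_Ici ht ht
    simp only [hx'2, zero_mul] at h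
    have h0 : (x' t 1 * Real.exp t) ^ 2 ≤ 0 := by simpa using h
    have h1 : (x' t 1 * Real.exp t) ^ 2 = 0 := le_antisymm h0 (sq_nonneg _)
    have h2 : x' t 1 * Real.exp t = 0 := by
      exact pow_eq_zero_iff (n := 2) (by norm_num) |>.1 h1
    rcases mul_eq_zero.1 h2 with h3 | h3
    · exact h3
    · exact absurd h3 (Real.exp_ne_zero t)
  -- Step 2: the Lyapunov function
  set e1 : ℝ → ℝ := fun t => x t 0 - x' t 0 with he1def
  set e2 : ℝ → ℝ := fun t => x t 1 - x' t 1 with he2def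
  set c : ℝ := 2 - Real.pi / 2 with hcdef
  have hW : AntitoneOn (fun t => (e1 t ^ 2 + e2 t ^ 2) * Real.exp (c * t)) (Ici 0) := by
    have hWd : ∀ t ∈ interior (Ici (0:ℝ)), HasDerivAt
        (fun s => (e1 s ^ 2 + e2 s ^ 2) * Real.exp (c * s))
        ((2 * e1 t * (-(e1 t) - Real.arctan (x t 0) * e2 t) + 2 * e2 t * (-(e2 t))
          + c * (e1 t ^ 2 + e2 t ^ 2)) * Real.exp (c * t)) t := by
      intro t ht
      rw [interior_Ici] at ht
      have hz : x' t 1 = 0 := key2 t (mem_Ici.2 (le_of_lt ht))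
      have he1 : HasDerivAt e1 (-(e1 t) - Real.arctan (x t 0) * e2 t) t := by
        have := (hd0 t ht).fun_sub (hd0' t ht)
        refine this.congr_deriv ?_
        simp only [he1def, he2def, hz]
        ring
      have he2 : HasDerivAt e2 (-(e2 t)) t := by
        have := (hd1 t ht).fun_sub (hd1' t ht)
        refine this.congr_deriv ?_
        ring
      have hV : HasDerivAt (fun s => e1 s ^ 2 + e2 s ^ 2)
          (2 * e1 t * (-(e1 t) - Real.arctan (x t 0) * e2 t) + 2 * e2 t * (-(e2 t))) t := by
        have := (he1.fun_pow 2).fun_add (he2.fun_pow 2)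
        refine this.congr_deriv ?_
        push_cast
        ring
      have hlin : HasDerivAt (fun s : ℝ => c * s) c t := by
        simpa using (hasDerivAt_id t).const_mul c
      have hE : HasDerivAt (fun s : ℝ => Real.exp (c * s)) (Real.exp (c * t) * c) t :=
        HasDerivAt.comp t (Real.hasDerivAt_exp (c * t)) hlin
      have := hV.fun_mul hE
      refine this.congr_deriv ?_
      ring
    apply antitoneOn_of_deriv_nonpos (convex_Ici 0)
    · exact (((hc0.sub hc0').pow 2).add ((hc1.sub hc1').pow 2)).mul
        (Real.continuous_exp.comp (continuous_const.mul continuous_id)).continuousOn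
    · intro t ht
      exact (hWd t ht).differentiableAt.differentiableWithinAt
    · intro t ht
      rw [(hWd t ht).deriv]
      have ha1 : Real.arctan (x t 0) < Real.pi / 2 := Real.arctan_lt_pi_div_two _
      have ha2 : -(Real.pi / 2) < Real.arctan (x t 0) := Real.neg_pi_div_two_lt_arctan _
      have hle : 2 * e1 t * (-(e1 t) - Real.arctan (x t 0) * e2 t) + 2 * e2 t * (-(e2 t))
          + c * (e1 t ^ 2 + e2 t ^ 2) ≤ 0 := by
        rw [hcdef]
        nlinarith [mul_nonneg (sub_nonneg.2 ha1.le) (sq_nonneg (e1 t - e2 t)),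
          mul_nonneg (by linarith : (0:ℝ) ≤ Real.pi / 2 + Real.arctan (x t 0))
            (sq_nonneg (e1 t + e2 t))]
      exact mul_nonpos_of_nonpos_of_nonneg hle (Real.exp_pos _).le
  -- conclude
  intro t ht
  have h := hW self_mem_Ici ht ht
  simp only [mul_zero, Real.exp_zero, mul_one] at h
  have hEpos : (0:ℝ) < Real.exp (c * t) := Real.exp_pos _
  have hVt : e1 t ^ 2 + e2 t ^ 2 ≤ Real.exp ((Real.pi / 2 - 2) * t) * (e1 0 ^ 2 + e2 0 ^ 2) := by
    have hprod : Real.exp (c * t) * Real.exp ((Real.pi / 2 - 2) * t) = 1 := by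
      rw [← Real.exp_add, show c * t + (Real.pi / 2 - 2) * t = 0 by rw [hcdef]; ring,
        Real.exp_zero]
    have := mul_le_mul_of_nonneg_right h (Real.exp_pos ((Real.pi / 2 - 2) * t)).le
    calc e1 t ^ 2 + e2 t ^ 2
        = (e1 t ^ 2 + e2 t ^ 2) * (Real.exp (c * t) * Real.exp ((Real.pi / 2 - 2) * t)) := by
          rw [hprod, mul_one]
      _ = (e1 t ^ 2 + e2 t ^ 2) * Real.exp (c * t) * Real.exp ((Real.pi / 2 - 2) * t) := by ring
      _ ≤ (e1 0 ^ 2 + e2 0 ^ 2) * Real.exp ((Real.pi / 2 - 2) * t) := this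
      _ = Real.exp ((Real.pi / 2 - 2) * t) * (e1 0 ^ 2 + e2 0 ^ 2) := by ring
  calc Real.sqrt (e1 t ^ 2 + e2 t ^ 2)
      ≤ Real.sqrt (Real.exp ((Real.pi / 2 - 2) * t) * (e1 0 ^ 2 + e2 0 ^ 2)) :=
        Real.sqrt_le_sqrt hVt
    _ = Real.exp ((Real.pi / 4 - 1) * t) * Real.sqrt (e1 0 ^ 2 + e2 0 ^ 2) := by
        rw [Real.sqrt_mul (Real.exp_pos _).le, ← Real.exp_half,
          show (Real.pi / 2 - 2) * t / 2 = (Real.pi / 4 - 1) * t by ring]
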